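/- arXiv:2401.14138 — 2 statements merged into one kernel-verified Lean document; each statement's English description precedes it below -/
import Mathlib

section
/- If n ≡ 2 or 3 (mod 4), then the discriminant of F_n(x) is a negative rational number. -/
open Polynomial BigOperators

/-- `F n` is the truncated logarithmic polynomial `1 + x + x²/2 + ⋯ + xⁿ/n ∈ ℚ[x]`. -/
noncomputable def F (n : ℕ) : Polynomial ℚ :=
  1 + ∑ k ∈ Finset.Icc 1 n, Polynomial.C ((k : ℚ)⁻¹) * Polynomial.X ^ k

/-- `Ln n = lcm {1, 2, …, n}`. -/
def Ln (n : ℕ) : ℕ := (Finset.Icc 1 n).lcm id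

/-- `Ftilde n = Ln n • F n`, a polynomial with integer coefficients. -/
noncomputable def Ftilde (n : ℕ) : Polynomial ℚ := Polynomial.C ((Ln n : ℚ)) * F n

/-- The resultant `Res(P, Q)` of two polynomials over `ℚ`, computed in `ℂ` via the
product formula `Res(P,Q) = lc(P)^(deg Q) * ∏_{P(r)=0} Q(r)` (roots with multiplicity). -/
noncomputable def resC (P Q : Polynomial ℚ) : ℂ :=
  ((P.leadingCoeff : ℂ)) ^ Q.natDegree *
    ((P.map (algebraMap ℚ ℂ)).roots.map (fun r => (Q.map (algebraMap ℚ ℂ)).eval r)).prod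

/-- The discriminant `disc P = (−1)^(n(n−1)/2) ⬝ a_n⁻¹ ⬝ Res(P, P′)`, as a complex number. -/
noncomputable def discC (P : Polynomial ℚ) : ℂ :=
  (-1) ^ (P.natDegree.choose 2) * ((P.leadingCoeff : ℂ))⁻¹ * resC P (Polynomial.derivative P)

/-- `𝒫 n = ∏_θ F̃_n(θ)`, the product over the nontrivial `n`-th roots of unity in `ℂ`. -/
noncomputable def P (n : ℕ) : ℂ :=
  ∏ θ ∈ (Polynomial.nthRootsFinset n (1 : ℂ)).erase 1, (Polynomial.aeval θ) (Ftilde n)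

/-- `Xc m ω = ∏_{k=1}^{m−1} (1/m + ω^k + ω^{2k}/2 + ⋯ + ω^{(m−1)k}/(m−1))`. -/
noncomputable def Xc (m : ℕ) (ω : ℂ) : ℂ :=
  ∏ k ∈ Finset.Icc 1 (m - 1), ((m : ℂ)⁻¹ + ∑ j ∈ Finset.Icc 1 (m - 1), ω ^ (j * k) / (j : ℂ))

/-- `Y m = 1 + 1/2 + ⋯ + 1/m ∈ ℚ`. -/
def Y (m : ℕ) : ℚ := ∑ j ∈ Finset.Icc 1 m, (j : ℚ)⁻¹


lemma F_coeff (n j : ℕ) :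
    (F n).coeff j = if j = 0 then 1 else if j ≤ n then (j : ℚ)⁻¹ else 0 := by
  unfold F
  rw [coeff_add, Polynomial.finset_sum_coeff]
  simp only [coeff_C_mul, coeff_X_pow, Polynomial.coeff_one]
  rcases eq_or_ne j 0 with rfl | hj
  · rw [Finset.sum_eq_zero, if_pos rfl, if_pos rfl, add_zero]
    intro k hk
    simp only [Finset.mem_Icc] at hk
    have : ¬ (0 = k) := by omega
    simp [this]
  · rw [if_neg hj, if_neg hj, zero_add]
    rcases le_or_gt j n with hle | hlt
    · rw [Finset.sum_eq_single j, if_pos rfl, mul_one, if_pos hle]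
      · intro k _ hkj
        simp [Ne.symm hkj]
      · intro hjmem
        exact absurd (Finset.mem_Icc.2 ⟨by omega, hle⟩) hjmem
    · rw [if_neg (by omega), Finset.sum_eq_zero]
      intro k hk
      simp only [Finset.mem_Icc] at hk
      have : ¬ (j = k) := by omega
      simp [this]

lemma F_natDegree {n : ℕ} (hn : n ≠ 0) : (F n).natDegree = n := by
  apply le_antisymm
  · rw [Polynomial.natDegree_le_iff_coeff_eq_zero]
    intro N hN
    rw [F_coeff]
    have : N ≠ 0 := by omega
    simp [this, Nat.not_le.2 hN]
  · apply Polynomial.le_natDegree_of_ne_zero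
    rw [F_coeff]
    simp [hn, Nat.pos_of_ne_zero hn]

lemma F_leadingCoeff {n : ℕ} (hn : n ≠ 0) : (F n).leadingCoeff = (n : ℚ)⁻¹ := by
  rw [Polynomial.leadingCoeff, F_natDegree hn, F_coeff]
  simp [hn]

lemma F_derivative {n : ℕ} : derivative (F n) = ∑ j ∈ Finset.range n, (X:ℚ[X]) ^ j := by
  unfold F
  rw [derivative_add, derivative_one, zero_add, derivative_sum]
  refine Finset.sum_nbij' (fun k => k - 1) (fun j => j + 1) ?_ ?_ ?_ ?_ ?_
  · intro k hk; simp only [Finset.mem_Icc] at hk; simp only [Finset.mem_range]; omega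
  · intro j hj; simp only [Finset.mem_range] at hj; simp only [Finset.mem_Icc]; omega
  · intro k hk; simp only [Finset.mem_Icc] at hk; omega
  · intro j hj; omega
  · intro k hk
    simp only [Finset.mem_Icc] at hk
    rw [derivative_C_mul_X_pow]
    have hk0 : (k:ℚ) ≠ 0 := by exact_mod_cast (by omega : k ≠ 0)
    rw [inv_mul_cancel₀ hk0]
    simp

section AuxAll
open Finset
-- general Abel summation over Icc 1 N
lemma abel_icc (u c : ℕ → ℂ) (N : ℕ) :
    ∑ k ∈ Icc 1 N, u k * c k =
      ∑ m ∈ Icc 1 (N - 1), (c m - c (m + 1)) * (∑ k ∈ Icc 1 m, u k)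
        + c N * (∑ k ∈ Icc 1 N, u k) := by
  induction N with
  | zero => simp
  | succ N ih =>
    rcases Nat.eq_zero_or_pos N with rfl | hN
    · simp; ring
    · have h1 : N - 1 + 1 = N := by omega
      rw [Finset.sum_Icc_succ_top (by omega : 1 ≤ N + 1), ih, Nat.add_sub_cancel]
      have hsplit : ∑ x ∈ Icc 1 N, (c x - c (x + 1)) * (∑ k ∈ Icc 1 x, u k)
          = ∑ x ∈ Icc 1 (N - 1), (c x - c (x + 1)) * (∑ k ∈ Icc 1 x, u k)
            + (c N - c (N + 1)) * (∑ k ∈ Icc 1 N, u k) := by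
        conv_lhs => rw [← h1]
        rw [Finset.sum_Icc_succ_top (by omega : 1 ≤ N - 1 + 1), h1]
      have hu : ∑ k ∈ Icc 1 N, u k = ∑ k ∈ Icc 1 (N - 1), u k + u N := by
        conv_lhs => rw [← h1]
        rw [Finset.sum_Icc_succ_top (by omega : 1 ≤ N - 1 + 1), h1]
      rw [hsplit, Finset.sum_Icc_succ_top (by omega : 1 ≤ N + 1), hu]
      ring

lemma normSq_one_of (θ : ℂ) {n : ℕ} (hn : n ≠ 0) (h : θ ^ n = 1) : Complex.normSq θ = 1 := by
  have h1 : ‖θ‖ = 1 := Complex.norm_eq_one_of_pow_eq_one h hn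
  rw [Complex.normSq_eq_norm_sq, h1, one_pow]

-- Fejér kernel identity
lemma fejer (θ : ℂ) (hc : Complex.normSq θ = 1) (m : ℕ) :
    Complex.normSq (∑ j ∈ range (m + 1), θ ^ j)
      = (m + 1 : ℝ) + 2 * (∑ j ∈ Icc 1 m, ∑ k ∈ Icc 1 j, θ ^ k).re := by
  have hmc : (starRingEnd ℂ) θ * θ = 1 := by
    rw [mul_comm, Complex.mul_conj, hc]; norm_num
  induction m with
  | zero => simp
  | succ m ih =>
    rw [Finset.sum_range_succ, Complex.normSq_add, ih, Finset.sum_Icc_succ_top (by omega : 1 ≤ m + 1)]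
    have h2 : Complex.normSq (θ ^ (m + 1)) = 1 := by
      rw [map_pow, hc, one_pow]
    have h3 : ((∑ j ∈ range (m + 1), θ ^ j) * (starRingEnd ℂ) (θ ^ (m + 1))).re
        = (∑ k ∈ Icc 1 (m + 1), θ ^ k).re := by
      have : (∑ j ∈ range (m + 1), θ ^ j) * (starRingEnd ℂ) (θ ^ (m + 1))
          = (starRingEnd ℂ) (∑ k ∈ Icc 1 (m + 1), θ ^ k) := by
        rw [map_sum, Finset.sum_mul]
        refine Finset.sum_nbij' (fun j => m + 1 - j) (fun k => m + 1 - k) ?_ ?_ ?_ ?_ ?_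
        · intro j hj; simp only [Finset.mem_range] at hj; simp only [Finset.mem_Icc]; omega
        · intro k hk; simp only [Finset.mem_Icc] at hk; simp only [Finset.mem_range]; omega
        · intro j hj; simp only [Finset.mem_range] at hj; omega
        · intro k hk; simp only [Finset.mem_Icc] at hk; omega
        · intro j hj
          simp only [Finset.mem_range] at hj
          rw [map_pow, map_pow]
          have expand : θ ^ (m + 1) = θ ^ j * θ ^ (m + 1 - j) := by
            rw [← pow_add]; congr 1; omega
          calc θ ^ j * (starRingEnd ℂ) θ ^ (m + 1)
              = θ ^ j * ((starRingEnd ℂ) θ ^ j * (starRingEnd ℂ) θ ^ (m + 1 - j)) := by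
                rw [← pow_add]; congr 2; omega
            _ = (((starRingEnd ℂ) θ) * θ) ^ j * (starRingEnd ℂ) θ ^ (m + 1 - j) := by ring
            _ = (starRingEnd ℂ) θ ^ (m + 1 - j) := by rw [hmc, one_pow, one_mul]
      rw [this, Complex.conj_re]
    rw [h2, h3, Complex.add_re]
    push_cast
    ring


lemma tele (N : ℕ) :
    ∑ m ∈ Icc 1 N, ((m : ℝ)⁻¹ - ((m : ℝ) + 2)⁻¹)
      = 3 / 2 - ((N : ℝ) + 1)⁻¹ - ((N : ℝ) + 2)⁻¹ := by
  induction N with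
  | zero => norm_num
  | succ N ih =>
    rw [Finset.sum_Icc_succ_top (by omega : 1 ≤ N + 1), ih]
    have h1 : (0:ℝ) < (N : ℝ) + 1 := by positivity
    have h2 : (0:ℝ) < (N : ℝ) + 2 := by positivity
    have h3 : (0:ℝ) < (N : ℝ) + 3 := by positivity
    push_cast
    field_simp
    ring

lemma re_pos {n : ℕ} (hn : 2 ≤ n) {θ : ℂ} (hθn : θ ^ n = 1) (hθ1 : θ ≠ 1) :
    0 < (1 + ∑ k ∈ Icc 1 n, θ ^ k * ((k : ℂ))⁻¹).re := by
  set A : ℕ → ℂ := fun m => ∑ k ∈ Icc 1 m, θ ^ k with hA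
  set B : ℕ → ℂ := fun m => ∑ j ∈ Icc 1 m, A j with hB
  have hnormSq : Complex.normSq θ = 1 := normSq_one_of θ (by omega) hθn
  have hBre : ∀ m : ℕ, -(((m : ℝ) + 1) / 2) ≤ (B m).re := by
    intro m
    have hf := fejer θ hnormSq m
    have h0 : 0 ≤ Complex.normSq (∑ j ∈ range (m + 1), θ ^ j) := Complex.normSq_nonneg _
    rw [hf] at h0
    simp only [hB, hA]
    linarith
  have hAn : A n = 0 := by
    have hg : ∑ j ∈ range n, θ ^ j = 0 := by
      rw [geom_sum_eq hθ1 n, hθn, sub_self, zero_div]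
    have hAθ : A n = θ * ∑ j ∈ range n, θ ^ j := by
      rw [hA, Finset.mul_sum]
      refine Finset.sum_nbij' (fun k => k - 1) (fun j => j + 1) ?_ ?_ ?_ ?_ ?_
      · intro k hk; simp only [Finset.mem_Icc] at hk; simp only [Finset.mem_range]; omega
      · intro j hj; simp only [Finset.mem_range] at hj; simp only [Finset.mem_Icc]; omega
      · intro k hk; simp only [Finset.mem_Icc] at hk; omega
      · intro j hj; omega
      · intro k hk
        simp only [Finset.mem_Icc] at hk
        rw [← pow_succ']
        congr 1
        omega
    rw [hAθ, hg, mul_zero]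
  set c : ℕ → ℂ := fun k => ((k : ℝ)⁻¹ : ℂ) with hc
  have hsum_eq : ∑ k ∈ Icc 1 n, θ ^ k * ((k : ℂ))⁻¹ = ∑ k ∈ Icc 1 n, θ ^ k * c k := by
    refine Finset.sum_congr rfl fun k _ => ?_
    simp only [hc]
    norm_num
  have h1 : ∑ k ∈ Icc 1 n, θ ^ k * c k
      = ∑ m ∈ Icc 1 (n - 1), (c m - c (m + 1)) * A m + c n * A n := abel_icc _ _ n
  rw [hAn, mul_zero, add_zero] at h1
  have h2 : ∑ m ∈ Icc 1 (n - 1), (c m - c (m + 1)) * A m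
      = ∑ m ∈ Icc 1 (n - 1 - 1), ((c m - c (m + 1)) - (c (m + 1) - c (m + 2))) * B m
          + (c (n - 1) - c (n - 1 + 1)) * B (n - 1) := by
    have habel := abel_icc A (fun m => c m - c (m + 1)) (n - 1)
    calc ∑ m ∈ Icc 1 (n - 1), (c m - c (m + 1)) * A m
        = ∑ m ∈ Icc 1 (n - 1), A m * (c m - c (m + 1)) :=
          Finset.sum_congr rfl fun m _ => mul_comm _ _
      _ = ∑ m ∈ Icc 1 (n - 1 - 1), ((c m - c (m + 1)) - (c (m + 1) - c (m + 2))) * B m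
          + (c (n - 1) - c (n - 1 + 1)) * B (n - 1) := by
          rw [habel, mul_comm]
  set e : ℕ → ℝ := fun m => (m : ℝ)⁻¹ - ((m : ℝ) + 1)⁻¹ with he
  have hce : ∀ m : ℕ, c m - c (m + 1) = ((e m : ℝ) : ℂ) := by
    intro m
    simp only [hc, he]
    push_cast
    ring
  have hre : (∑ k ∈ Icc 1 n, θ ^ k * c k).re
      = ∑ m ∈ Icc 1 (n - 1 - 1), (e m - e (m + 1)) * (B m).re
        + e (n - 1) * (B (n - 1)).re := by
    rw [h1, h2, Complex.add_re, Complex.re_sum]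
    congr 1
    · refine Finset.sum_congr rfl fun m hm => ?_
      rw [hce m, hce (m + 1), ← Complex.ofReal_sub, Complex.re_ofReal_mul]
    · rw [hce (n - 1), Complex.re_ofReal_mul]
  have he_anti : ∀ m : ℕ, 1 ≤ m → 0 ≤ e m - e (m + 1) := by
    intro m hm
    have h1 : (0:ℝ) < m := by exact_mod_cast hm
    simp only [he]
    push_cast
    have e1 : (m:ℝ)⁻¹ - ((m:ℝ)+1)⁻¹ = ((m:ℝ)*((m:ℝ)+1))⁻¹ := by
      rw [inv_sub_inv (by positivity) (by positivity : ((m:ℝ)+1) ≠ 0),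
        show ((m:ℝ)+1) - (m:ℝ) = 1 by ring, one_div]
    have e2 : ((m:ℝ)+1)⁻¹ - ((m:ℝ)+1+1)⁻¹ = (((m:ℝ)+1)*((m:ℝ)+1+1))⁻¹ := by
      rw [inv_sub_inv (by positivity : ((m:ℝ)+1) ≠ 0) (by positivity : ((m:ℝ)+1+1) ≠ 0),
        show ((m:ℝ)+1+1) - ((m:ℝ)+1) = 1 by ring, one_div]
    rw [show (m:ℝ)⁻¹ - ((m:ℝ)+1)⁻¹ - (((m:ℝ)+1)⁻¹ - ((m:ℝ)+1+1)⁻¹)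
        = ((m:ℝ)⁻¹ - ((m:ℝ)+1)⁻¹) - (((m:ℝ)+1)⁻¹ - ((m:ℝ)+1+1)⁻¹) by ring, e1, e2, sub_nonneg]
    apply inv_anti₀
    · positivity
    · nlinarith
  -- per-term identity
  have hterm_id : ∀ m : ℕ, 1 ≤ m →
      (e m - e (m + 1)) * (((m:ℝ) + 1) / 2) = (1/2) * ((m:ℝ)⁻¹ - ((m:ℝ)+2)⁻¹) := by
    intro m hm
    have h1 : (0:ℝ) < m := by exact_mod_cast hm
    simp only [he]
    push_cast
    field_simp
    ring
  have hlow : -(3/4 : ℝ) < (∑ k ∈ Icc 1 n, θ ^ k * c k).re := by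
    rw [hre]
    have hsum_ge : ∑ m ∈ Icc 1 (n - 1 - 1), -((e m - e (m + 1)) * (((m:ℝ)+1)/2))
        ≤ ∑ m ∈ Icc 1 (n - 1 - 1), (e m - e (m + 1)) * (B m).re := by
      refine Finset.sum_le_sum fun m hm => ?_
      simp only [Finset.mem_Icc] at hm
      have := mul_le_mul_of_nonneg_left (hBre m) (he_anti m hm.1)
      calc -((e m - e (m + 1)) * (((m:ℝ)+1)/2))
          = (e m - e (m + 1)) * (-(((m:ℝ)+1)/2)) := by ring
        _ ≤ (e m - e (m + 1)) * (B m).re := this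
    have hlast : e (n-1) * (-(((n:ℝ))/2)) ≤ e (n - 1) * (B (n - 1)).re := by
      have hb := hBre (n-1)
      have hcast : ((n - 1 : ℕ) : ℝ) + 1 = (n : ℝ) := by
        have : (1:ℕ) ≤ n := by omega
        push_cast [this]
        ring
      rw [hcast] at hb
      have hen : 0 ≤ e (n-1) := by
        have h1 : (0:ℝ) < ((n-1:ℕ):ℝ) := by
          have : (1:ℕ) ≤ n - 1 := by omega
          exact_mod_cast by omega
        simp only [he]
        rw [sub_nonneg]
        apply inv_anti₀ h1
        linarith
      exact mul_le_mul_of_nonneg_left hb hen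
    have hid : ∑ m ∈ Icc 1 (n - 1 - 1), -((e m - e (m + 1)) * (((m:ℝ)+1)/2))
        = -((1/2) * (3 / 2 - (((n-1-1 : ℕ) : ℝ) + 1)⁻¹ - (((n-1-1:ℕ) : ℝ) + 2)⁻¹)) := by
      calc ∑ m ∈ Icc 1 (n - 1 - 1), -((e m - e (m + 1)) * (((m:ℝ)+1)/2))
          = ∑ m ∈ Icc 1 (n - 1 - 1), -((1:ℝ)/2 * ((m:ℝ)⁻¹ - ((m:ℝ)+2)⁻¹)) := by
            refine Finset.sum_congr rfl fun m hm => ?_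
            simp only [Finset.mem_Icc] at hm
            rw [hterm_id m hm.1]
        _ = -((1:ℝ)/2 * ∑ m ∈ Icc 1 (n - 1 - 1), ((m:ℝ)⁻¹ - ((m:ℝ)+2)⁻¹)) := by
            rw [Finset.mul_sum, ← Finset.sum_neg_distrib]
        _ = -((1/2) * (3 / 2 - (((n-1-1 : ℕ) : ℝ) + 1)⁻¹ - (((n-1-1:ℕ) : ℝ) + 2)⁻¹)) := by
            rw [tele]
    have hx : (2:ℝ) ≤ (n:ℝ) := by exact_mod_cast hn
    have hc1 : ((n - 1 - 1 : ℕ) : ℝ) = (n:ℝ) - 2 := by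
      rw [show n - 1 - 1 = n - 2 by omega, Nat.cast_sub hn]
      norm_num
    have hc2 : ((n - 1 : ℕ) : ℝ) = (n:ℝ) - 1 := by
      rw [Nat.cast_sub (by omega : 1 ≤ n)]
      norm_num
    have hxu : ((n:ℝ) - 1) * ((n:ℝ) - 1)⁻¹ = 1 := mul_inv_cancel₀ (by linarith)
    have hxv : (n:ℝ) * (n:ℝ)⁻¹ = 1 := mul_inv_cancel₀ (by linarith)
    have hv : 0 < (n:ℝ)⁻¹ := inv_pos.2 (by linarith)
    have heval : e (n-1) = ((n:ℝ)-1)⁻¹ - (n:ℝ)⁻¹ := by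
      simp only [he]
      rw [hc2, show (n:ℝ) - 1 + 1 = (n:ℝ) by ring]
    have hfin : -(3/4 : ℝ) <
        -((1/2) * (3 / 2 - (((n-1-1 : ℕ) : ℝ) + 1)⁻¹ - (((n-1-1:ℕ) : ℝ) + 2)⁻¹))
          + e (n-1) * (-(((n:ℝ))/2)) := by
      rw [hc1, heval, show (n:ℝ) - 2 + 1 = (n:ℝ) - 1 by ring,
        show (n:ℝ) - 2 + 2 = (n:ℝ) by ring]
      nlinarith [hxu, hxv, hv]
    calc -(3/4 : ℝ)
        < -((1/2) * (3 / 2 - (((n-1-1 : ℕ) : ℝ) + 1)⁻¹ - (((n-1-1:ℕ) : ℝ) + 2)⁻¹))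
            + e (n-1) * (-(((n:ℝ))/2)) := hfin
      _ = (∑ m ∈ Icc 1 (n - 1 - 1), -((e m - e (m + 1)) * (((m:ℝ)+1)/2)))
            + e (n-1) * (-(((n:ℝ))/2)) := by rw [hid]
      _ ≤ ∑ m ∈ Icc 1 (n - 1 - 1), (e m - e (m + 1)) * (B m).re
            + e (n - 1) * (B (n - 1)).re := add_le_add hsum_ge hlast
  rw [hsum_eq, Complex.add_re, Complex.one_re]
  linarith


lemma geom_natDegree {n : ℕ} (hn : n ≠ 0) :
    (∑ j ∈ Finset.range n, (X:ℚ[X]) ^ j).natDegree = n - 1 := by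
  have hcoeff : ∀ j : ℕ, (∑ i ∈ Finset.range n, (X:ℚ[X]) ^ i).coeff j
      = if j ∈ Finset.range n then 1 else 0 := by
    intro j
    rw [Polynomial.finset_sum_coeff]
    simp only [coeff_X_pow]
    exact Finset.sum_ite_eq (Finset.range n) j (fun _ => 1)
  apply le_antisymm
  · rw [Polynomial.natDegree_le_iff_coeff_eq_zero]
    intro N hN
    rw [hcoeff]
    simp only [Finset.mem_range]
    rw [if_neg (by omega)]
  · apply Polynomial.le_natDegree_of_ne_zero
    rw [hcoeff, if_pos (Finset.mem_range.2 (by omega))]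
    norm_num

lemma F_eval_one_pos {n : ℕ} : 0 < eval 1 (F n) := by
  unfold F
  rw [eval_add, eval_one, eval_finset_sum]
  have : ∀ k ∈ Finset.Icc 1 n, eval 1 (C ((k:ℚ)⁻¹) * X ^ k) = (k:ℚ)⁻¹ := by
    intro k _
    rw [eval_mul, eval_C, eval_pow, eval_X, one_pow, mul_one]
  rw [Finset.sum_congr rfl this]
  have h : 0 ≤ ∑ k ∈ Finset.Icc 1 n, (k:ℚ)⁻¹ :=
    Finset.sum_nonneg fun k _ => by positivity
  linarith

-- multiset/finset product swap
lemma prod_swap_ms (M : Multiset ℂ) (s : Finset ℂ) (f : ℂ → ℂ → ℂ) :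
    (M.map (fun r => ∏ t ∈ s, f r t)).prod = ∏ t ∈ s, (M.map (fun r => f r t)).prod := by
  induction M using Multiset.induction_on with
  | empty => simp
  | cons a M ih => simp [ih, Finset.prod_mul_distrib]

lemma discC_eq {n : ℕ} (hn : 2 ≤ n) :
    discC (F n) = (-1) ^ (n.choose 2) * (n : ℂ) *
      ∏ t ∈ (nthRootsFinset n (1 : ℂ)).erase 1, eval t ((F n).map (algebraMap ℚ ℂ)) := by
  have hn0 : n ≠ 0 := by omega
  have hnpos : 0 < n := by omega
  set φ := algebraMap ℚ ℂ with hφ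
  set Fc := (F n).map φ with hFc
  set lc : ℂ := φ ((n:ℚ)⁻¹) with hlcdef
  have hlcne : lc ≠ 0 := by
    have hQ : ((n:ℚ)⁻¹) ≠ 0 := by positivity
    rw [hlcdef]
    exact fun h => hQ (φ.injective (by rw [h, map_zero]))
  have hlcQne : (F n).leadingCoeff ≠ 0 := by
    rw [F_leadingCoeff hn0]; positivity
  have hFQ0 : F n ≠ 0 := fun h => hlcQne (by rw [h, leadingCoeff_zero])
  have hFc0 : Fc ≠ 0 := by
    rw [hFc]
    exact (Polynomial.map_ne_zero_iff (f := φ) φ.injective).2 hFQ0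
  have hdeg : Fc.natDegree = n := by
    rw [hFc, natDegree_map, F_natDegree hn0]
  have hlc : Fc.leadingCoeff = lc := by
    rw [hFc, leadingCoeff_map, F_leadingCoeff hn0]
  have hsplit : Splits Fc := by
    rw [hFc]
    exact IsAlgClosed.splits _
  have hcard : Multiset.card Fc.roots = n := by
    rw [(splits_iff_card_roots).1 hsplit, hdeg]
  have hfact : Fc = C Fc.leadingCoeff * (Fc.roots.map fun a => X - C a).prod :=
    hsplit.eq_prod_roots
  have hEval : ∀ t : ℂ, eval t Fc = lc * (Fc.roots.map fun a => t - a).prod := by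
    intro t
    conv_lhs => rw [hfact]
    rw [eval_mul, eval_C, hlc, eval_multiset_prod, Multiset.map_map,
      Multiset.map_congr rfl (fun a _ => by simp :
        ∀ a ∈ Fc.roots, (eval t ∘ fun a => X - C a) a = t - a)]
  have hE1 : eval (1:ℂ) Fc ≠ 0 := by
    have h1 : eval (1:ℂ) Fc = φ (eval 1 (F n)) := by rw [hFc, eval_one_map]
    rw [h1]
    exact fun h => (F_eval_one_pos (n := n)).ne' (φ.injective (by rw [h, map_zero]))
  -- derivative facts
  have hdeg' : (derivative (F n)).natDegree = n - 1 := by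
    rw [F_derivative, geom_natDegree hn0]
  set dFc := (derivative (F n)).map φ with hdFc
  have hdevals : ∀ r : ℂ, (eval r dFc) * (r - 1) = r ^ n - 1 := by
    intro r
    have h1 : dFc = ∑ j ∈ Finset.range n, (X:ℂ[X]) ^ j := by
      rw [hdFc, F_derivative, Polynomial.map_sum]
      simp
    rw [h1, eval_finset_sum]
    simp only [eval_pow, eval_X]
    exact geom_sum_mul r n
  -- roots of unity
  obtain hζ := Complex.isPrimitiveRoot_exp n hn0
  have hpow : ∀ r : ℂ, r ^ n - 1 = ∏ t ∈ nthRootsFinset n (1 : ℂ), (r - t) := by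
    intro r
    have h1 := congrArg (eval r) (X_pow_sub_one_eq_prod hnpos hζ)
    simpa [eval_prod] using h1
  set N := Fc.roots with hN
  set W := ∏ t ∈ (nthRootsFinset n (1 : ℂ)).erase 1, eval t Fc with hW
  have hprod_t : ∀ t : ℂ, (N.map fun r => r - t).prod = (-1)^n * eval t Fc * lc⁻¹ := by
    intro t
    have h1 : (N.map fun r => r - t).prod = (-1)^n * (N.map fun r => t - r).prod := by
      have h2 : (N.map fun r => r - t) = (N.map fun r => t - r).map Neg.neg := by
        rw [Multiset.map_map]
        apply Multiset.map_congr rfl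
        intro r _
        simp
      rw [h2, Multiset.prod_map_neg, Multiset.card_map, hcard]
    rw [h1, show (N.map fun r => t - r).prod = eval t Fc * lc⁻¹ by
      rw [hEval t]; field_simp]
    ring
  have hX2 : (N.map (fun r => r ^ n - 1)).prod
      = ((-1:ℂ)^n)^n * (eval 1 Fc * W) * (lc⁻¹)^n := by
    have h1 : (N.map (fun r => r ^ n - 1)).prod
        = ∏ t ∈ nthRootsFinset n (1 : ℂ), (N.map (fun r => r - t)).prod := by
      rw [← prod_swap_ms]
      congr 1
      apply Multiset.map_congr rfl
      intro r _
      exact hpow r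
    rw [h1, Finset.prod_congr rfl (fun t _ => hprod_t t)]
    rw [Finset.prod_mul_distrib, Finset.prod_mul_distrib, Finset.prod_const, Finset.prod_const,
      hζ.card_nthRootsFinset, ← Finset.mul_prod_erase _ _ (one_mem_nthRootsFinset hnpos), ← hW]
  have hX3 : (N.map (fun r => r - 1)).prod = (-1)^n * eval 1 Fc * lc⁻¹ := hprod_t 1
  have hX1 : (N.map (fun r => eval r dFc)).prod * (N.map (fun r => r - 1)).prod
      = (N.map (fun r => r ^ n - 1)).prod := by
    rw [← Multiset.prod_map_mul]
    congr 1
    apply Multiset.map_congr rfl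
    intro r _
    exact hdevals r
  -- solve for the product of derivative values
  have hX3ne : (N.map (fun r => r - 1)).prod ≠ 0 := by
    rw [hX3]
    apply mul_ne_zero (mul_ne_zero (pow_ne_zero _ (by norm_num)) hE1) (inv_ne_zero hlcne)
  have hsign1 : ((-1:ℂ)^n)⁻¹ = (-1:ℂ)^n := by
    have h : ((-1:ℂ)^n) * ((-1:ℂ)^n) = 1 := by
      rw [← pow_add]
      exact Even.neg_one_pow (Even.add_self n)
    exact inv_eq_of_mul_eq_one_right h
  have hDprod : (N.map (fun r => eval r dFc)).prod = W * (lc⁻¹)^n * lc := by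
    have h1 : (N.map (fun r => eval r dFc)).prod
        = (N.map (fun r => r ^ n - 1)).prod * ((N.map (fun r => r - 1)).prod)⁻¹ := by
      field_simp [hX3ne]
      linear_combination hX1
    rw [h1, hX2, hX3]
    rw [mul_inv, mul_inv, inv_inv, hsign1]
    have hc : ((-1:ℂ)^n)^n * ((-1:ℂ)^n) = 1 := by
      rw [← pow_succ, ← pow_mul]
      exact Even.neg_one_pow (by exact (Nat.even_mul_succ_self n))
    calc ((-1:ℂ)^n)^n * (eval 1 Fc * W) * (lc⁻¹)^n * ((-1:ℂ)^n * (eval 1 Fc)⁻¹ * lc)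
        = (((-1:ℂ)^n)^n * ((-1:ℂ)^n)) * (eval 1 Fc * (eval 1 Fc)⁻¹) * W * (lc⁻¹)^n * lc := by
          ring
      _ = W * (lc⁻¹)^n * lc := by
          rw [hc, mul_inv_cancel₀ hE1]
          ring
  -- final assembly
  have hcast : ((F n).leadingCoeff : ℂ) = lc := by
    rw [F_leadingCoeff hn0, hlcdef, eq_ratCast φ]
  unfold discC resC
  rw [hcast, F_natDegree hn0, hdeg', ← hFc, ← hdFc, ← hN, hDprod]
  have hlcn : (n : ℂ) = lc⁻¹ := by
    rw [hlcdef, eq_ratCast φ]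
    push_cast
    rw [inv_inv]
  rw [hlcn]
  have hpowsplit : (lc⁻¹)^n = lc⁻¹ * (lc⁻¹)^(n-1) := by
    rw [← pow_succ']
    congr 1
    omega
  rw [hpowsplit]
  rw [inv_pow]
  field_simp

-- generic pairing lemma: product of f over a conj-stable finset avoiding 1,
-- with all factors of positive real part, has positive real part (and we get it real below)
lemma prod_re_pos (S : Finset ℂ) (f : ℂ → ℂ)
    (hconjS : ∀ θ ∈ S, (starRingEnd ℂ) θ ∈ S)
    (hconjf : ∀ θ ∈ S, f ((starRingEnd ℂ) θ) = (starRingEnd ℂ) (f θ))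
    (hpos : ∀ θ ∈ S, 0 < (f θ).re)
    (hreal : ∀ θ ∈ S, θ.im = 0 → (f θ).im = 0) :
    0 < (∏ θ ∈ S, f θ).re := by
  classical
  set S0 := S.filter (fun θ => θ.im = 0) with hS0
  set Sp := S.filter (fun θ => 0 < θ.im) with hSp
  set Sn := S.filter (fun θ => θ.im < 0) with hSn
  have hsplit : ∏ θ ∈ S, f θ = (∏ θ ∈ S0, f θ) * ((∏ θ ∈ Sp, f θ) * (∏ θ ∈ Sn, f θ)) := by
    rw [← Finset.prod_filter_mul_prod_filter_not S (fun θ => θ.im = 0) f]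
    congr 1
    rw [← Finset.prod_filter_mul_prod_filter_not (S.filter (fun θ => ¬ θ.im = 0))
      (fun θ => 0 < θ.im) f, Finset.filter_filter, Finset.filter_filter]
    congr 1
    · apply Finset.prod_congr _ (fun _ _ => rfl)
      apply Finset.filter_congr
      intro θ _
      constructor
      · rintro ⟨_, h2⟩; exact h2
      · intro h; exact ⟨by intro h0; rw [h0] at h; exact lt_irrefl _ h, h⟩
    · apply Finset.prod_congr _ (fun _ _ => rfl)
      apply Finset.filter_congr
      intro θ _
      constructor
      · rintro ⟨h1, h2⟩; cases lt_or_gt_of_ne h1 with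
        | inl h => exact h
        | inr h => exact absurd h h2
      · intro h; exact ⟨ne_of_lt h, not_lt.2 (le_of_lt h)⟩
  have hSnp : ∏ θ ∈ Sn, f θ = ∏ θ ∈ Sp, (starRingEnd ℂ) (f θ) := by
    refine Finset.prod_nbij' (fun θ => (starRingEnd ℂ) θ) (fun θ => (starRingEnd ℂ) θ)
      ?_ ?_ ?_ ?_ ?_
    · intro θ hθ
      simp only [hSn, Finset.mem_filter] at hθ
      simp only [hSp, Finset.mem_filter]
      exact ⟨hconjS θ hθ.1, by simp only [Complex.conj_im]; linarith [hθ.2]⟩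
    · intro θ hθ
      simp only [hSp, Finset.mem_filter] at hθ
      simp only [hSn, Finset.mem_filter]
      exact ⟨hconjS θ hθ.1, by simp only [Complex.conj_im]; linarith [hθ.2]⟩
    · intro θ _; simp
    · intro θ _; simp
    · intro θ hθ
      simp only [hSn, Finset.mem_filter] at hθ
      rw [hconjf θ hθ.1, Complex.conj_conj]
  have hz : (∏ θ ∈ Sp, f θ) ≠ 0 := by
    rw [Finset.prod_ne_zero_iff]
    intro θ hθ
    have hθS : θ ∈ S := Finset.filter_subset _ _ hθ
    intro h0
    have := hpos θ hθS
    rw [h0] at this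
    simp at this
  have hzz : (∏ θ ∈ Sp, f θ) * (∏ θ ∈ Sn, f θ)
      = (Complex.normSq (∏ θ ∈ Sp, f θ) : ℝ) := by
    rw [hSnp, ← map_prod, Complex.mul_conj]
  have ht0 : ∏ θ ∈ S0, f θ = ((∏ θ ∈ S0, (f θ).re : ℝ) : ℂ) := by
    rw [Complex.ofReal_prod]
    refine Finset.prod_congr rfl fun θ hθ => ?_
    simp only [hS0, Finset.mem_filter] at hθ
    exact (Complex.ext (by simp) (by simp [hreal θ hθ.1 hθ.2])).symm
  have ht0re : (0:ℝ) < ∏ θ ∈ S0, (f θ).re := by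
    refine Finset.prod_pos fun θ hθ => ?_
    simp only [hS0, Finset.mem_filter] at hθ
    exact hpos θ hθ.1
  rw [hsplit, hzz, ht0, ← Complex.ofReal_mul, Complex.ofReal_re]
  exact mul_pos ht0re (Complex.normSq_pos.2 hz)

lemma exists_rat_W (n : ℕ) (hn : 2 ≤ n) :
    ∃ r : ℚ, (r : ℂ) = ∏ θ ∈ (nthRootsFinset n (1 : ℂ)).erase 1,
      eval θ ((F n).map (algebraMap ℚ ℂ)) := by
  classical
  have hn0 : n ≠ 0 := by omega
  have hnpos : 0 < n := by omega
  set N : ℕ+ := ⟨n, hnpos⟩ with hN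
  let K := CyclotomicField N ℚ
  haveI : IsCyclotomicExtension {(N:ℕ)} ℚ K := CyclotomicField.isCyclotomicExtension (N:ℕ) ℚ
  haveI : FiniteDimensional ℚ K := IsCyclotomicExtension.finiteDimensional {(N:ℕ)} ℚ K
  haveI : IsGalois ℚ K := IsCyclotomicExtension.isGalois {(N:ℕ)} ℚ K
  haveI : Algebra.IsAlgebraic ℚ K := Algebra.IsAlgebraic.of_finite ℚ K
  let ε : K →ₐ[ℚ] ℂ := IsAlgClosed.lift
  have hεinj : Function.Injective ε := ε.toRingHom.injective
  -- the primitive root in K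
  have hζK : IsPrimitiveRoot (IsCyclotomicExtension.zeta N ℚ K) n := by
    exact IsCyclotomicExtension.zeta_spec N ℚ K
  have hζC := Complex.isPrimitiveRoot_exp n hn0
  -- image of nth roots
  have himage : (nthRootsFinset n (1 : K)).image ε = nthRootsFinset n (1 : ℂ) := by
    apply Finset.eq_of_subset_of_card_le
    · intro x hx
      simp only [Finset.mem_image] at hx
      obtain ⟨η, hη, rfl⟩ := hx
      rw [mem_nthRootsFinset hnpos]
      rw [mem_nthRootsFinset hnpos] at hη
      rw [← map_pow, hη, map_one]
    · rw [hζC.card_nthRootsFinset, Finset.card_image_of_injective _ hεinj,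
        hζK.card_nthRootsFinset]
  have herase : ((nthRootsFinset n (1 : K)).erase 1).image ε = (nthRootsFinset n (1 : ℂ)).erase 1 := by
    rw [Finset.image_erase hεinj, himage, map_one]
  -- rewrite the product through ε
  set w : K := ∏ η ∈ (nthRootsFinset n (1 : K)).erase 1, aeval η (F n) with hw
  have hWε : ∏ θ ∈ (nthRootsFinset n (1 : ℂ)).erase 1, eval θ ((F n).map (algebraMap ℚ ℂ)) = ε w := by
    rw [← herase, Finset.prod_image (fun a _ b _ h => hεinj h), hw, map_prod]
    refine Finset.prod_congr rfl fun η _ => ?_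
    rw [eval_map, ← aeval_def, Polynomial.aeval_algHom_apply]
  -- Galois invariance
  have hfix : ∀ σ : K ≃ₐ[ℚ] K, σ w = w := by
    intro σ
    have hσinj : Function.Injective σ := σ.injective
    have hσim : ((nthRootsFinset n (1 : K)).erase 1).image σ = (nthRootsFinset n (1 : K)).erase 1 := by
      rw [Finset.image_erase hσinj, map_one]
      congr 1
      apply Finset.eq_of_subset_of_card_le
      · intro x hx
        simp only [Finset.mem_image] at hx
        obtain ⟨η, hη, rfl⟩ := hx
        rw [mem_nthRootsFinset hnpos]
        rw [mem_nthRootsFinset hnpos] at hη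
        rw [← map_pow, hη, map_one]
      · rw [Finset.card_image_of_injective _ hσinj]
    rw [hw, map_prod]
    conv_rhs => rw [← hσim]
    rw [Finset.prod_image (fun a _ b _ h => hσinj h)]
    refine Finset.prod_congr rfl fun η _ => ?_
    exact (Polynomial.aeval_algHom_apply σ.toAlgHom η (F n)).symm
  -- fixed by the full Galois group → rational
  have hmem : w ∈ IntermediateField.fixedField (⊤ : Subgroup (K ≃ₐ[ℚ] K)) := by
    intro g
    exact hfix g.1
  rw [← IntermediateField.fixingSubgroup_bot (F := ℚ) (E := K),
    IsGalois.fixedField_fixingSubgroup (⊥ : IntermediateField ℚ K)] at hmem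
  rw [IntermediateField.mem_bot] at hmem
  obtain ⟨r, hr⟩ := hmem
  refine ⟨r, ?_⟩
  rw [hWε, ← hr, AlgHom.commutes, eq_ratCast (algebraMap ℚ ℂ)]


lemma eval_Fc {n : ℕ} (θ : ℂ) :
    eval θ ((F n).map (algebraMap ℚ ℂ)) = 1 + ∑ k ∈ Finset.Icc 1 n, θ ^ k * ((k:ℂ))⁻¹ := by
  unfold F
  rw [Polynomial.map_add, Polynomial.map_one, Polynomial.map_sum, eval_add, eval_one,
    eval_finset_sum]
  congr 1
  refine Finset.sum_congr rfl fun k _ => ?_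
  rw [Polynomial.map_mul, Polynomial.map_C, Polynomial.map_pow, Polynomial.map_X,
    eval_mul, eval_C, eval_pow, eval_X, map_inv₀, map_natCast]
  ring

lemma conj_eval {n : ℕ} (θ : ℂ) :
    eval ((starRingEnd ℂ) θ) ((F n).map (algebraMap ℚ ℂ))
      = (starRingEnd ℂ) (eval θ ((F n).map (algebraMap ℚ ℂ))) := by
  rw [eval_map, eval_map, Polynomial.hom_eval₂]
  congr 1
  exact (RingHom.ext fun q =>
    ((eq_ratCast ((starRingEnd ℂ).comp (algebraMap ℚ ℂ)) q).trans
      (eq_ratCast (algebraMap ℚ ℂ) q).symm)).symm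

lemma choose_two_odd {n : ℕ} (h : n % 4 = 2 ∨ n % 4 = 3) : Odd (n.choose 2) := by
  rw [Nat.choose_two_right]
  rcases h with h | h
  · obtain ⟨k, rfl⟩ : ∃ k, n = 4 * k + 2 := ⟨n / 4, by omega⟩
    have h1 : (4 * k + 2) * (4 * k + 2 - 1) = 2 * (8 * k * k + 6 * k + 1) := by
      rw [show 4 * k + 2 - 1 = 4 * k + 1 by omega]
      ring
    rw [h1, Nat.mul_div_cancel_left _ (by norm_num : 0 < 2)]
    exact ⟨4 * k * k + 3 * k, by ring⟩
  · obtain ⟨k, rfl⟩ : ∃ k, n = 4 * k + 3 := ⟨n / 4, by omega⟩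
    have h1 : (4 * k + 3) * (4 * k + 3 - 1) = 2 * (8 * k * k + 10 * k + 3) := by
      rw [show 4 * k + 3 - 1 = 4 * k + 2 by omega]
      ring
    rw [h1, Nat.mul_div_cancel_left _ (by norm_num : 0 < 2)]
    exact ⟨4 * k * k + 5 * k + 1, by ring⟩


end AuxAll

/-- If `n ≡ 2, 3 (mod 4)` then `disc(F n)` is a negative rational number. -/
theorem stmt4 (n : ℕ) (h : n % 4 = 2 ∨ n % 4 = 3) :
    ∃ r : ℚ, r < 0 ∧ (r : ℂ) = discC (F n) := by
  have hn2 : 2 ≤ n := by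
    have := Nat.mod_le n 4
    omega
  have hn0 : n ≠ 0 := by omega
  have hnpos : 0 < n := by omega
  -- positivity of the product over nontrivial roots of unity
  have hpos : ∀ θ ∈ (nthRootsFinset n (1 : ℂ)).erase 1,
      0 < (eval θ ((F n).map (algebraMap ℚ ℂ))).re := by
    intro θ hθ
    have h1 : θ ≠ 1 := Finset.ne_of_mem_erase hθ
    have h2 : θ ^ n = 1 := (mem_nthRootsFinset hnpos 1).1 (Finset.mem_of_mem_erase hθ)
    rw [eval_Fc]
    exact re_pos hn2 h2 h1
  have hWre : 0 < (∏ θ ∈ (nthRootsFinset n (1 : ℂ)).erase 1,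
      eval θ ((F n).map (algebraMap ℚ ℂ))).re := by
    apply prod_re_pos
    · intro θ hθ
      have h1 : θ ≠ 1 := Finset.ne_of_mem_erase hθ
      have h2 : θ ^ n = 1 := (mem_nthRootsFinset hnpos 1).1 (Finset.mem_of_mem_erase hθ)
      rw [Finset.mem_erase]
      constructor
      · intro hc
        apply h1
        have := congrArg (starRingEnd ℂ) hc
        rwa [Complex.conj_conj, map_one] at this
      · rw [mem_nthRootsFinset hnpos, ← map_pow, h2, map_one]
    · intro θ _
      exact conj_eval θ
    · exact hpos
    · intro θ hθ him
      have hconj : (starRingEnd ℂ) θ = θ := Complex.conj_eq_iff_im.2 him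
      have := conj_eval (n := n) θ
      rw [hconj] at this
      exact Complex.conj_eq_iff_im.1 this.symm
  obtain ⟨r, hr⟩ := exists_rat_W n hn2
  have hrpos : 0 < r := by
    have : (0:ℝ) < ((r:ℂ)).re := by rw [hr]; exact hWre
    simp only [Complex.ratCast_re] at this
    exact_mod_cast this
  refine ⟨-((n : ℚ) * r), ?_, ?_⟩
  · have hn' : 0 < (n:ℚ) := by exact_mod_cast hnpos
    have := mul_pos hn' hrpos
    linarith
  · rw [discC_eq hn2, ← hr, Odd.neg_one_pow (choose_two_odd h)]
    push_cast
    ring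
end

section
/- Let p be a prime with p ≡ 1 (mod 4), let e be a positive integer, and set n = p^e. Then the integer 𝒫_n = ∏_θ F̃_n(θ), with θ ranging over the nontrivial n-th roots of unity in ℂ, is coprime to p. -/
open Polynomial BigOperators

/-! ### Auxiliary lemmas -/

lemma lcm_fact_le (p : ℕ) (e : ℕ) (s : Finset ℕ)
    (h : ∀ k ∈ s, k ≠ 0 ∧ k.factorization p ≤ e) :
    s.lcm id ≠ 0 ∧ (s.lcm id).factorization p ≤ e := by
  classical
  induction s using Finset.induction_on with
  | empty => simp
  | @insert a s _ ih =>
    obtain ⟨ha0, hae⟩ := h a (Finset.mem_insert_self a s)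
    obtain ⟨h0, hle⟩ := ih (fun k hk => h k (Finset.mem_insert_of_mem hk))
    rw [Finset.lcm_insert]
    refine ⟨Nat.lcm_ne_zero ha0 h0, ?_⟩
    rw [show lcm (id a) (s.lcm id) = Nat.lcm a (s.lcm id) from rfl,
      Nat.factorization_lcm ha0 h0]
    simp only [Finsupp.sup_apply, id]
    exact sup_le hae hle

lemma fact_le_of_le_pow {p : ℕ} (hp : p.Prime) {k e : ℕ} (hk : k ≠ 0) (hke : k ≤ p ^ e) :
    k.factorization p ≤ e := by
  by_contra h
  push_neg at h
  have h1 : p ^ (e + 1) ∣ k := (Nat.Prime.pow_dvd_iff_le_factorization hp hk).2 h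
  have := Nat.le_of_dvd (Nat.pos_of_ne_zero hk) h1
  have h2 : p ^ e < p ^ (e+1) := Nat.pow_lt_pow_right hp.one_lt (Nat.lt_succ_self e)
  omega

lemma not_pow_succ_dvd_Ln {p e n : ℕ} (hp : p.Prime) (hn : n = p ^ e) :
    ¬ p ^ (e + 1) ∣ Ln n := by
  obtain ⟨h0, hle⟩ := lcm_fact_le p e (Finset.Icc 1 n) (fun k hk => by
    simp only [Finset.mem_Icc] at hk
    exact ⟨by omega, fact_le_of_le_pow hp (by omega) (hn ▸ hk.2)⟩)
  intro hdvd
  have := (Nat.Prime.pow_dvd_iff_le_factorization hp h0).1 hdvd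
  omega

lemma p_mul_dvd_Ln {p e n k : ℕ} (hp : p.Prime) (hn : n = p ^ e)
    (hk1 : 1 ≤ k) (hkn : k ≤ n - 1) :
    p * k ∣ Ln n := by
  have hk0 : k ≠ 0 := by omega
  have hn0 : 0 < n := hn ▸ pow_pos hp.pos e
  set j := k.factorization p with hj
  have hordc : p ^ j * (k / p ^ j) = k := Nat.ordProj_mul_ordCompl_eq_self k p
  have hjlt : j < e := by
    by_contra h
    push_neg at h
    have : p ^ e ∣ k := dvd_trans (pow_dvd_pow p h) (Nat.ordProj_dvd k p)
    have := Nat.le_of_dvd (by omega) this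
    omega
  have h1 : p ^ (j + 1) ∣ Ln n := by
    apply Finset.dvd_lcm
    simp only [Finset.mem_Icc]
    exact ⟨Nat.one_le_pow _ _ hp.pos, hn ▸ Nat.pow_le_pow_right hp.pos (by omega)⟩
  have h2 : (k / p ^ j) ∣ Ln n :=
    dvd_trans (Nat.ordCompl_dvd k p)
      (Finset.dvd_lcm (by simp only [Finset.mem_Icc]; omega))
  have hcop : Nat.Coprime (p ^ (j + 1)) (k / p ^ j) :=
    Nat.Coprime.pow_left _ ((Nat.Prime.coprime_iff_not_dvd hp).2 (Nat.not_dvd_ordCompl hp hk0))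
  have hdvd := Nat.Coprime.mul_dvd_of_dvd_of_dvd hcop h1 h2
  have heq : p ^ (j + 1) * (k / p ^ j) = p * k := by
    rw [pow_succ, mul_comm (p ^ j) p, mul_assoc, hordc]
  rwa [heq] at hdvd

lemma prod_primRoots_rat (m : ℕ+) (g : Polynomial ℚ) :
    ∃ q : ℚ, (q : ℂ) = ∏ η ∈ primitiveRoots (m : ℕ) ℂ, aeval η g := by
  haveI : NeZero (m : ℕ) := ⟨m.ne_zero⟩
  let K := CyclotomicField m ℚ
  haveI : IsCyclotomicExtension {(m : ℕ)} ℚ K :=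
    haveI : NeZero ((m : ℕ) : ℚ) := ⟨by exact_mod_cast m.ne_zero⟩
    CyclotomicField.isCyclotomicExtension (m : ℕ) ℚ
  have hζ := IsCyclotomicExtension.zeta_spec m ℚ K
  have hirr : Irreducible (cyclotomic (m : ℕ) ℚ) := cyclotomic.irreducible_rat m.pos
  letI := IsCyclotomicExtension.finiteDimensional {(m : ℕ)} ℚ K
  refine ⟨Algebra.norm ℚ (aeval (IsCyclotomicExtension.zeta m ℚ K) g), ?_⟩
  have h1 : (algebraMap ℚ ℂ) (Algebra.norm ℚ (aeval (IsCyclotomicExtension.zeta m ℚ K) g))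
      = ∏ σ : K →ₐ[ℚ] ℂ, σ (aeval (IsCyclotomicExtension.zeta m ℚ K) g) :=
    Algebra.norm_eq_prod_embeddings ℚ ℂ _
  rw [show ((_ : ℚ) : ℂ) = (algebraMap ℚ ℂ) _ from rfl, h1]
  rw [← Finset.prod_attach (primitiveRoots (m : ℕ) ℂ) (fun η => aeval η g),
    ← Finset.univ_eq_attach]
  refine Fintype.prod_equiv (hζ.embeddingsEquivPrimitiveRoots ℂ hirr) _ _ fun σ => ?_
  rw [IsPrimitiveRoot.embeddingsEquivPrimitiveRoots_apply_coe]
  exact (aeval_algHom_apply σ _ g).symm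

lemma aeval_Ftilde {n : ℕ} (θ : ℂ) :
    aeval θ (Ftilde n) = ((Ln n : ℂ)) + ∑ k ∈ Finset.Icc 1 n, ((Ln n / k : ℕ) : ℂ) * θ ^ k := by
  simp only [Ftilde, F, map_mul, map_add, map_one, map_sum, map_pow, aeval_C, aeval_X,
    map_inv₀, map_natCast]
  rw [mul_add, mul_one, Finset.mul_sum]
  congr 1
  refine Finset.sum_congr rfl fun k hk => ?_
  have hk1 : 1 ≤ k := (Finset.mem_Icc.1 hk).1
  have hdvd : k ∣ Ln n := Finset.dvd_lcm hk
  have hk0 : (k : ℂ) ≠ 0 := Nat.cast_ne_zero.2 (by omega)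
  rw [Nat.cast_div hdvd hk0]
  field_simp

lemma roots_unity_integral {n : ℕ} (hn : 0 < n) {θ : ℂ} (hθ : θ ^ n = 1) : IsIntegral ℤ θ := by
  refine ⟨X ^ n - C 1, monic_X_pow_sub_C 1 (by omega), ?_⟩
  simp [hθ]

lemma natCast_integral (m : ℕ) : IsIntegral ℤ ((m : ℂ)) := by
  have : ((m : ℂ)) = algebraMap ℤ ℂ (m : ℤ) := by push_cast; ring
  rw [this]; exact isIntegral_algebraMap

lemma aeval_Ftilde_decomp {p e n : ℕ} (hp : p.Prime) (hn : n = p ^ e)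
    (hpk : ∀ k, 1 ≤ k → k ≤ n - 1 → p * k ∣ Ln n) (hpLn : p ∣ Ln n)
    {θ : ℂ} (hθ : θ ^ n = 1) :
    ∃ γ : ℂ, IsIntegral ℤ γ ∧ aeval θ (Ftilde n) = ((Ln n / n : ℕ) : ℂ) + p * γ := by
  have hn0 : 0 < n := hn ▸ pow_pos hp.pos e
  refine ⟨((Ln n / p : ℕ) : ℂ) + ∑ k ∈ Finset.Icc 1 (n-1), ((Ln n / k / p : ℕ) : ℂ) * θ ^ k,
    ?_, ?_⟩
  · refine IsIntegral.add (natCast_integral _) (IsIntegral.sum _ fun k hk => ?_)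
    exact (natCast_integral _).mul ((roots_unity_integral hn0 hθ).pow k)
  · rw [aeval_Ftilde]
    have hsplit : Finset.Icc 1 n = insert n (Finset.Icc 1 (n-1)) := by
      ext x
      simp only [Finset.mem_Icc, Finset.mem_insert]
      omega
    rw [hsplit, Finset.sum_insert (by simp only [Finset.mem_Icc]; omega)]
    rw [hθ, mul_one]
    rw [mul_add, Finset.mul_sum]
    have h1 : (Ln n : ℂ) = (p : ℂ) * ((Ln n / p : ℕ) : ℂ) := by
      rw [← Nat.cast_mul, Nat.mul_div_cancel' hpLn]
    have h2 : ∀ k ∈ Finset.Icc 1 (n-1), ((Ln n / k : ℕ) : ℂ) * θ ^ k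
        = (p : ℂ) * (((Ln n / k / p : ℕ) : ℂ) * θ ^ k) := by
      intro k hk
      simp only [Finset.mem_Icc] at hk
      have hdvdk : k ∣ Ln n := Finset.dvd_lcm (by simp only [Finset.mem_Icc]; omega)
      have hpdvd : p ∣ Ln n / k := (Nat.dvd_div_iff_mul_dvd hdvdk).2 (by
        rw [mul_comm]; exact hpk k hk.1 hk.2)
      rw [← mul_assoc, ← Nat.cast_mul, Nat.mul_div_cancel' hpdvd]
    rw [Finset.sum_congr rfl h2, h1]
    ring

lemma prod_decomp (pp c : ℂ) (hc : IsIntegral ℤ c) (hpp : IsIntegral ℤ pp)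
    (s : Finset ℂ) (f : ℂ → ℂ)
    (h : ∀ θ ∈ s, ∃ γ, IsIntegral ℤ γ ∧ f θ = c + pp * γ) :
    ∃ δ, IsIntegral ℤ δ ∧ ∏ θ ∈ s, f θ = c ^ s.card + pp * δ := by
  classical
  induction s using Finset.induction_on with
  | empty => exact ⟨0, isIntegral_zero, by simp⟩
  | @insert a s ha ih =>
    obtain ⟨γ, hγ, hfa⟩ := h a (Finset.mem_insert_self a s)
    obtain ⟨δ, hδ, hprod⟩ := ih (fun θ hθ => h θ (Finset.mem_insert_of_mem hθ))
    refine ⟨γ * c ^ s.card + c * δ + pp * (γ * δ), ?_, ?_⟩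
    · exact ((hγ.mul (hc.pow _)).add (hc.mul hδ)).add (hpp.mul (hγ.mul hδ))
    · rw [Finset.prod_insert ha, hfa, hprod, Finset.card_insert_of_notMem ha]
      ring

lemma erase_nthRoots {p e n : ℕ} (hp : p.Prime) (hn : n = p ^ e) :
    (Polynomial.nthRootsFinset n (1 : ℂ)).erase 1
      = (Finset.Icc 1 e).biUnion (fun j => primitiveRoots (p ^ j) ℂ) := by
  have hn0 : 0 < n := hn ▸ pow_pos hp.pos e
  ext θ
  simp only [Finset.mem_erase, Polynomial.mem_nthRootsFinset hn0, Finset.mem_biUnion,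
    Finset.mem_Icc]
  constructor
  · rintro ⟨hne, hpow⟩
    have hord : orderOf θ ∣ n := orderOf_dvd_of_pow_eq_one hpow
    rw [hn] at hord
    obtain ⟨j, hje, hj⟩ := (Nat.dvd_prime_pow hp).1 hord
    have hj1 : 1 ≤ j := by
      rcases Nat.eq_zero_or_pos j with h0 | h1
      · exfalso; apply hne
        rw [h0, pow_zero] at hj
        exact orderOf_eq_one_iff.1 hj
      · exact h1
    refine ⟨j, ⟨hj1, hje⟩, ?_⟩
    rw [mem_primitiveRoots (pow_pos hp.pos j), ← hj]
    exact IsPrimitiveRoot.orderOf θ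
  · rintro ⟨j, ⟨hj1, hje⟩, hmem⟩
    rw [mem_primitiveRoots (pow_pos hp.pos j)] at hmem
    constructor
    · intro h1
      rw [h1] at hmem
      have h2 := hmem.eq_orderOf
      simp only [orderOf_one] at h2
      have h3 : 2 ≤ p ^ j :=
        le_trans hp.two_le (Nat.le_self_pow (by omega) p)
      omega
    · rw [hn, show e = j + (e - j) by omega, pow_add, pow_mul, hmem.pow_eq_one, one_pow]

lemma P_rat {p e n : ℕ} (hp : p.Prime) (hn : n = p ^ e) :
    ∃ q : ℚ, (q : ℂ) = P n := by
  rw [P, erase_nthRoots hp hn]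
  rw [Finset.prod_biUnion (fun i _ j _ hij =>
    IsPrimitiveRoot.disjoint (fun h => hij (Nat.pow_right_injective hp.two_le h)))]
  refine ⟨∏ j ∈ Finset.Icc 1 e,
    Classical.choose (prod_primRoots_rat ⟨p ^ j, pow_pos hp.pos j⟩ (Ftilde n)), ?_⟩
  push_cast
  exact Finset.prod_congr rfl fun j _ =>
    Classical.choose_spec (prod_primRoots_rat ⟨p ^ j, pow_pos hp.pos j⟩ (Ftilde n))

/-- If `p ≡ 1 (mod 4)` is prime, `e ≥ 1` and `n = p^e`, then the integer
`𝒫 n` is coprime to `p`. -/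
theorem stmt5 (p e n : ℕ) (hp : p.Prime) (hp4 : p % 4 = 1) (he : 0 < e) (hn : n = p ^ e) :
    ∃ z : ℤ, (z : ℂ) = P n ∧ IsCoprime z (p : ℤ) := by
  have hn0 : 0 < n := hn ▸ pow_pos hp.pos e
  have hnIcc : n ∈ Finset.Icc 1 n := Finset.mem_Icc.2 ⟨hn0, le_refl n⟩
  have hnLn : n ∣ Ln n := Finset.dvd_lcm hnIcc
  have hpLn : p ∣ Ln n := Finset.dvd_lcm (Finset.mem_Icc.2
    ⟨hp.pos, hn ▸ Nat.le_self_pow (by omega) p⟩)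
  have hpc : ¬ p ∣ Ln n / n := by
    intro h
    apply not_pow_succ_dvd_Ln hp hn
    have h2 : n * p ∣ Ln n := (Nat.dvd_div_iff_mul_dvd hnLn).1 h
    rw [pow_succ, ← hn]
    exact h2
  set c : ℕ := Ln n / n with hc
  -- decompose product
  obtain ⟨δ, hδint, hPdec⟩ := prod_decomp (p : ℂ) ((c : ℕ) : ℂ) (natCast_integral c)
    (natCast_integral p) ((Polynomial.nthRootsFinset n (1 : ℂ)).erase 1)
    (fun θ => aeval θ (Ftilde n))
    (fun θ hθ => aeval_Ftilde_decomp hp hn (fun k hk1 hkn => p_mul_dvd_Ln hp hn hk1 hkn) hpLn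
      ((Polynomial.mem_nthRootsFinset hn0 (1 : ℂ)).1 (Finset.mem_of_mem_erase hθ)))
  obtain ⟨q, hq⟩ := P_rat hp hn
  set N := ((Polynomial.nthRootsFinset n (1 : ℂ)).erase 1).card with hN
  have hPeq : P n = (c : ℂ) ^ N + (p : ℂ) * δ := hPdec
  have hpC : (p : ℂ) ≠ 0 := Nat.cast_ne_zero.2 hp.pos.ne'
  have hpQ : (p : ℚ) ≠ 0 := Nat.cast_ne_zero.2 hp.pos.ne'
  -- δ is rational
  have hδval : δ = algebraMap ℚ ℂ ((q - (c : ℚ) ^ N) / p) := by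
    have h1 : (p : ℂ) * δ = (q : ℂ) - (c : ℂ) ^ N := by
      rw [hq, hPeq]; ring
    rw [show algebraMap ℚ ℂ ((q - (c : ℚ) ^ N) / p) = ((q : ℂ) - (c : ℂ) ^ N) / (p : ℂ) by
      push_cast [map_div₀]; norm_num]
    rw [← h1]
    field_simp
  have hδrat : IsIntegral ℤ ((q - (c : ℚ) ^ N) / p) := by
    rw [← isIntegral_algebraMap_iff (algebraMap ℚ ℂ).injective, ← hδval]
    exact hδint
  obtain ⟨d, hd⟩ := IsIntegrallyClosed.isIntegral_iff.1 hδrat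
  have hdq : (d : ℚ) = (q - (c : ℚ) ^ N) / p := hd
  have hq2 : q = (c : ℚ) ^ N + (p : ℚ) * d := by
    field_simp at hdq
    linarith [hdq]
  refine ⟨(c : ℤ) ^ N + (p : ℤ) * d, ?_, ?_⟩
  · rw [← hq, hq2]
    push_cast
    ring
  · have hndvd : ¬ (p : ℤ) ∣ ((c : ℤ) ^ N + (p : ℤ) * d) := by
      intro hdvd
      have h1 : (p : ℤ) ∣ (c : ℤ) ^ N := by
        have := dvd_sub hdvd (Dvd.intro d rfl)
        simpa using this
      have h2 : (p : ℤ) ∣ (c : ℤ) := Int.Prime.dvd_pow' (by exact_mod_cast hp) h1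
      exact hpc (Int.ofNat_dvd.1 (by exact_mod_cast h2))
    exact ((Int.prime_iff_natAbs_prime.2 (by simpa using hp)).coprime_iff_not_dvd.2
      hndvd).symm
end
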